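/- arXiv:1708.09777 — 2 statements merged into one kernel-verified Lean document; each statement's English description precedes it below -/
import Mathlib

section
/- If q and x are positive integers satisfying q⁴ − q² = 2x² − 2x, then q = 1 or q = 2. Equivalently, with S_1 = {n ∈ ℕ⁺ : ∃ x ∈ ℕ⁺, n(n−1) = 2x(x−1)} and S_2 the set of perfect squares, one has S_1 ∩ S_2 = {1, 4}. -/
namespace S1S2Aux

/-- Pair `(H n, P n)` of half-companion and Pell numbers. -/
def PH : ℕ → ℕ × ℕ
  | 0 => (1, 0)
  | n + 1 => ((PH n).1 + 2 * (PH n).2, (PH n).1 + (PH n).2)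

def Hs (n : ℕ) : ℕ := (PH n).1
def Ps (n : ℕ) : ℕ := (PH n).2

@[simp] lemma Hs_zero : Hs 0 = 1 := rfl
@[simp] lemma Ps_zero : Ps 0 = 0 := rfl
@[simp] lemma Hs_succ (n : ℕ) : Hs (n + 1) = Hs n + 2 * Ps n := rfl
@[simp] lemma Ps_succ (n : ℕ) : Ps (n + 1) = Hs n + Ps n := rfl

lemma Hs_pos (n : ℕ) : 0 < Hs n := by
  induction n with
  | zero => simp
  | succ n ih => simp; omega

lemma Ps_pos (n : ℕ) (hn : 0 < n) : 0 < Ps n := by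
  cases n with
  | zero => omega
  | succ n => have := Hs_pos n; simp; omega

lemma Ps_eq_zero {n : ℕ} (h : Ps n = 0) : n = 0 := by
  by_contra hn
  have := Ps_pos n (by omega)
  omega

lemma Hs_eq_one {n : ℕ} (h : Hs n = 1) : n ≤ 1 := by
  by_contra hn
  push_neg at hn
  obtain ⟨m, rfl⟩ : ∃ m, n = m + 2 := ⟨n - 2, by omega⟩
  have h1 := Hs_pos m
  have h2 := Ps_pos (m + 1) (by omega)
  simp at h
  omega

/-- Pell's equation for the sequences. -/
lemma pell (n : ℕ) :
    (Even n → Hs n ^ 2 = 2 * Ps n ^ 2 + 1) ∧ (Odd n → Hs n ^ 2 + 1 = 2 * Ps n ^ 2) := by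
  induction n with
  | zero => simp [Nat.not_odd_iff_even.mpr (Even.zero)]
  | succ n ih =>
    constructor
    · intro he
      have ho : Odd n := Nat.Even.sub_odd (by omega) he odd_one
      have h := ih.2 ho
      have : (Hs n : ℤ) ^ 2 + 1 = 2 * (Ps n : ℤ) ^ 2 := by exact_mod_cast h
      have goal : ((Hs n + 2 * Ps n : ℕ) : ℤ) ^ 2 = 2 * ((Hs n + Ps n : ℕ) : ℤ) ^ 2 + 1 := by
        push_cast
        linear_combination -this
      simp only [Hs_succ, Ps_succ]
      exact_mod_cast goal
    · intro ho
      have he : Even n := by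
        rcases Nat.even_or_odd n with h | h
        · exact h
        · exact absurd ho (by simp [Nat.even_add_one, Nat.not_even_iff_odd.mpr h])
      have h := ih.1 he
      have : (Hs n : ℤ) ^ 2 = 2 * (Ps n : ℤ) ^ 2 + 1 := by exact_mod_cast h
      have goal : ((Hs n + 2 * Ps n : ℕ) : ℤ) ^ 2 + 1 = 2 * ((Hs n + Ps n : ℕ) : ℤ) ^ 2 := by
        push_cast
        linear_combination -this
      simp only [Hs_succ, Ps_succ]
      exact_mod_cast goal

lemma pell_even {n : ℕ} (h : Even n) : Hs n ^ 2 = 2 * Ps n ^ 2 + 1 := (pell n).1 h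
lemma pell_odd {n : ℕ} (h : Odd n) : Hs n ^ 2 + 1 = 2 * Ps n ^ 2 := (pell n).2 h

/-- Addition formulas. -/
lemma add_formulas (m n : ℕ) :
    Ps (m + n) = Ps m * Hs n + Ps n * Hs m ∧ Hs (m + n) = Hs m * Hs n + 2 * Ps m * Ps n := by
  induction n with
  | zero => simp
  | succ n ih =>
    obtain ⟨hp, hh⟩ := ih
    constructor
    · have : m + (n + 1) = (m + n) + 1 := by omega
      rw [this, Ps_succ, hp, hh, Hs_succ, Ps_succ]
      ring
    · have : m + (n + 1) = (m + n) + 1 := by omega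
      rw [this, Hs_succ, hp, hh, Hs_succ, Ps_succ]
      ring

lemma Ps_add (m n : ℕ) : Ps (m + n) = Ps m * Hs n + Ps n * Hs m := (add_formulas m n).1
lemma Hs_add (m n : ℕ) : Hs (m + n) = Hs m * Hs n + 2 * Ps m * Ps n := (add_formulas m n).2

lemma Ps_double (r : ℕ) : Ps (2 * r) = 2 * Ps r * Hs r := by
  have : 2 * r = r + r := by omega
  rw [this, Ps_add]; ring

lemma Hs_odd_idx (m : ℕ) : Hs (2 * m + 1) = Hs m * Hs (m + 1) + 2 * Ps m * Ps (m + 1) := by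
  have : 2 * m + 1 = m + (m + 1) := by omega
  rw [this, Hs_add]

/-- cross identity -/
lemma cross (n : ℕ) :
    (Even n → Hs (n + 1) * Hs n = 2 * (Ps (n + 1) * Ps n) + 1) ∧
    (Odd n → Hs (n + 1) * Hs n + 1 = 2 * (Ps (n + 1) * Ps n)) := by
  constructor
  · intro he
    have h := pell_even he
    have h' : (Hs n : ℤ) ^ 2 = 2 * (Ps n : ℤ) ^ 2 + 1 := by exact_mod_cast h
    have goal : ((Hs n + 2 * Ps n : ℕ) : ℤ) * Hs n = 2 * (((Hs n + Ps n : ℕ) : ℤ) * Ps n) + 1 := by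
      push_cast; linear_combination h'
    simp only [Hs_succ, Ps_succ]
    exact_mod_cast goal
  · intro ho
    have h := pell_odd ho
    have h' : (Hs n : ℤ) ^ 2 + 1 = 2 * (Ps n : ℤ) ^ 2 := by exact_mod_cast h
    have goal : ((Hs n + 2 * Ps n : ℕ) : ℤ) * Hs n + 1 = 2 * (((Hs n + Ps n : ℕ) : ℤ) * Ps n) := by
      push_cast; linear_combination h'
    simp only [Hs_succ, Ps_succ]
    exact_mod_cast goal

lemma Hs_odd (n : ℕ) : Hs n % 2 = 1 := by
  induction n with
  | zero => simp
  | succ n ih => simp; omega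

lemma Ps_parity (n : ℕ) : Ps n % 2 = n % 2 := by
  induction n with
  | zero => simp
  | succ n ih => have := Hs_odd n; simp; omega

lemma coprime_HP (n : ℕ) : Nat.Coprime (Hs n) (Ps n) := by
  have hd1 : Nat.gcd (Hs n) (Ps n) ∣ Hs n ^ 2 := dvd_pow (Nat.gcd_dvd_left _ _) two_ne_zero
  have hd2 : Nat.gcd (Hs n) (Ps n) ∣ 2 * Ps n ^ 2 :=
    Dvd.dvd.mul_left (dvd_pow (Nat.gcd_dvd_right _ _) two_ne_zero) 2
  rcases Nat.even_or_odd n with h | h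
  · have := pell_even h
    have : Nat.gcd (Hs n) (Ps n) ∣ 1 := by
      have h3 : Hs n ^ 2 - 2 * Ps n ^ 2 = 1 := by omega
      calc Nat.gcd (Hs n) (Ps n) ∣ Hs n ^ 2 - 2 * Ps n ^ 2 := Nat.dvd_sub hd1 hd2
      _ = 1 := h3
    simpa [Nat.Coprime] using Nat.eq_one_of_dvd_one this
  · have := pell_odd h
    have : Nat.gcd (Hs n) (Ps n) ∣ 1 := by
      have h3 : 2 * Ps n ^ 2 - Hs n ^ 2 = 1 := by omega
      calc Nat.gcd (Hs n) (Ps n) ∣ 2 * Ps n ^ 2 - Hs n ^ 2 := Nat.dvd_sub hd2 hd1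
      _ = 1 := h3
    simpa [Nat.Coprime] using Nat.eq_one_of_dvd_one this

lemma coprime_Ps_succ (n : ℕ) : Nat.Coprime (Ps n) (Ps (n + 1)) := by
  have h := coprime_HP n
  simp only [Ps_succ]
  simpa [Nat.Coprime, Nat.gcd_comm] using (Nat.coprime_add_self_right.mpr h.symm)

end S1S2Aux

namespace S1S2Aux

/-- Every solution of `u² + 1 = 2 z²` comes from the Pell sequences. -/
lemma classify : ∀ z : ℕ, ∀ u : ℕ, u ^ 2 + 1 = 2 * z ^ 2 → ∃ n, u = Hs n ∧ z = Ps n := by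
  intro z
  induction z using Nat.strong_induction_on with
  | _ z IH =>
  intro u hu
  have hz0 : z ≠ 0 := by rintro rfl; simp at hu
  by_cases hz1 : z = 1
  · subst hz1
    have hle : u ≤ 1 := by nlinarith
    have hge : 1 ≤ u := by nlinarith
    have : u = 1 := by omega
    exact ⟨1, by simp [this]⟩
  · have hz2 : 2 ≤ z := by omega
    have huz : z < u := by by_contra h; push_neg at h; nlinarith
    by_cases hz2' : z = 2
    · exfalso; subst hz2'; have h3 : 3 ≤ u := by omega
      nlinarith
    · have hz3 : 3 ≤ z := by omega
      have h3u : 4 * z < 3 * u := by by_contra h; push_neg at h; nlinarith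
      have h2u : 2 * u < 3 * z := by by_contra h; push_neg at h; nlinarith
      obtain ⟨a, ha⟩ : ∃ a, a + 4 * z = 3 * u := ⟨3 * u - 4 * z, by omega⟩
      obtain ⟨b, hb⟩ : ∃ b, b + 2 * u = 3 * z := ⟨3 * z - 2 * u, by omega⟩
      have hblt : b < z := by omega
      have heq : a ^ 2 + 1 = 2 * b ^ 2 := by
        have hZ : (u : ℤ) ^ 2 + 1 = 2 * (z : ℤ) ^ 2 := by exact_mod_cast hu
        have haZ : (a : ℤ) = 3 * (u : ℤ) - 4 * (z : ℤ) := by omega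
        have hbZ : (b : ℤ) = 3 * (z : ℤ) - 2 * (u : ℤ) := by omega
        have : (a : ℤ) ^ 2 + 1 = 2 * (b : ℤ) ^ 2 := by
          rw [haZ, hbZ]; linear_combination hZ
        exact_mod_cast this
      obtain ⟨n, rfl, rfl⟩ := IH b hblt a heq
      have h1 : Hs (n + 2) = 3 * Hs n + 4 * Ps n := by
        show Hs (n + 1) + 2 * Ps (n + 1) = _
        simp only [Hs_succ, Ps_succ]; ring
      have h2 : Ps (n + 2) = 2 * Hs n + 3 * Ps n := by
        show Hs (n + 1) + Ps (n + 1) = _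
        simp only [Hs_succ, Ps_succ]; ring
      exact ⟨n + 2, by omega, by omega⟩

/-- extract square factors from a coprime product that is a square (ℕ). -/
lemma nat_sq_of_coprime {a b c : ℕ} (h : Nat.Coprime a b) (heq : a * b = c ^ 2) :
    ∃ d, a = d ^ 2 := by
  have hI : IsCoprime (a : ℤ) (b : ℤ) := Int.isCoprime_iff_gcd_eq_one.mpr (by
    simpa [Int.gcd_natCast_natCast] using h)
  obtain ⟨a0, h0 | h0⟩ := Int.sq_of_isCoprime (c := (c : ℤ)) hI (by exact_mod_cast heq)
  · refine ⟨a0.natAbs, ?_⟩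
    have := congrArg Int.natAbs h0
    simpa [Int.natAbs_pow] using this
  · have ha0 : (a : ℤ) ≤ 0 := by nlinarith [sq_nonneg a0]
    have : a = 0 := by exact_mod_cast le_antisymm (by exact_mod_cast ha0) (Nat.zero_le a)
    exact ⟨0, by simp [this]⟩

lemma not_square_between {w s : ℕ} (hw : 1 ≤ w) (h : s ^ 2 = w ^ 2 + w) : False := by
  rcases le_or_gt s w with hl | hl
  · nlinarith
  · nlinarith

/-- Elementary: `a⁴ = 2y² + 1` forces `a = 1, y = 0`. -/
lemma quartic_eq_two_sq_add_one {a y : ℕ} (h : a ^ 4 = 2 * y ^ 2 + 1) : a = 1 ∧ y = 0 := by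
  have haodd : a % 2 = 1 := by
    rcases Nat.even_or_odd a with he | ho
    · exfalso
      obtain ⟨t, rfl⟩ := he
      have : (t + t) ^ 4 = 16 * t ^ 4 := by ring
      omega
    · obtain ⟨t, rfl⟩ := ho; omega
  obtain ⟨w, rfl⟩ : ∃ w, a = 2 * w + 1 := ⟨a / 2, by omega⟩
  have hexp : (2 * w + 1) ^ 4 = 2 * (8 * w ^ 4 + 16 * w ^ 3 + 12 * w ^ 2 + 4 * w) + 1 := by ring
  have hyeven : y % 2 = 0 := by
    rcases Nat.even_or_odd y with he | ho
    · obtain ⟨t, rfl⟩ := he; omega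
    · exfalso; obtain ⟨t, rfl⟩ := ho
      have h1 : (2 * t + 1) ^ 2 = 2 * (2 * t ^ 2 + 2 * t) + 1 := by ring
      omega
  obtain ⟨y', rfl⟩ : ∃ y', y = 2 * y' := ⟨y / 2, by omega⟩
  have key : y' ^ 2 = (w ^ 2 + w) * (2 * w ^ 2 + 2 * w + 1) := by
    have hexp2 : (2 * w + 1) ^ 4 = 8 * ((w ^ 2 + w) * (2 * w ^ 2 + 2 * w + 1)) + 1 := by ring
    have h2 : 2 * (2 * y') ^ 2 + 1 = 8 * y' ^ 2 + 1 := by ring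
    omega
  have hw0 : w = 0 := by
    by_contra hw
    have hw1 : 1 ≤ w := by omega
    have hcop : Nat.Coprime (w ^ 2 + w) (2 * w ^ 2 + 2 * w + 1) := by
      rw [show 2 * w ^ 2 + 2 * w + 1 = (w ^ 2 + w) * 2 + 1 by ring]
      exact (Nat.coprime_mul_left_add_right _ _ _).mpr (Nat.coprime_one_right _)
    obtain ⟨s, hs⟩ := nat_sq_of_coprime hcop key.symm
    exact not_square_between hw1 hs.symm
  subst hw0
  refine ⟨by norm_num, ?_⟩
  simp at key
  omega

end S1S2Aux

namespace S1S2Aux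

/-- Descent helper: from `X² = 4u⁴ + v⁴` produce a smaller right-triangle-type solution. -/
lemma key2 {X u v : ℕ} (hu : 0 < u) (hv : 0 < v)
    (hcop : Nat.Coprime (v ^ 2) (2 * u ^ 2)) (h : X ^ 2 = 4 * u ^ 4 + v ^ 4) :
    ∃ e f w, 0 < f ∧ 0 < w ∧ Nat.Coprime e f ∧ e ^ 4 = f ^ 4 + w ^ 2 ∧ e < X := by
  have hvodd : v % 2 = 1 := by
    by_contra hv2
    have h2 : 2 ∣ v ^ 2 := Dvd.dvd.pow (by omega : 2 ∣ v) two_ne_zero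
    have h2' : 2 ∣ 2 * u ^ 2 := ⟨u ^ 2, rfl⟩
    have hg : (2 : ℕ) ∣ Nat.gcd (v ^ 2) (2 * u ^ 2) := Nat.dvd_gcd h2 h2'
    have : Nat.gcd (v ^ 2) (2 * u ^ 2) = 1 := hcop
    omega
  have hXpos : 0 < X := by
    rcases Nat.eq_zero_or_pos X with h0 | h0
    · exfalso
      have h1 : 1 ≤ v ^ 4 := Nat.one_le_pow _ _ hv
      have h2 : X ^ 2 = 0 := by rw [h0]; ring
      omega
    · exact h0
  have ht : PythagoreanTriple ((v : ℤ) ^ 2) (2 * (u : ℤ) ^ 2) (X : ℤ) := by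
    have hI : (X : ℤ) ^ 2 = 4 * (u : ℤ) ^ 4 + (v : ℤ) ^ 4 := by exact_mod_cast h
    show (v : ℤ) ^ 2 * (v : ℤ) ^ 2 + 2 * (u : ℤ) ^ 2 * (2 * (u : ℤ) ^ 2) = (X : ℤ) * (X : ℤ)
    linear_combination -hI
  have hgcd : Int.gcd ((v : ℤ) ^ 2) (2 * (u : ℤ) ^ 2) = 1 := by
    have e1 : ((v : ℤ)) ^ 2 = ((v ^ 2 : ℕ) : ℤ) := by push_cast; ring
    have e2 : 2 * ((u : ℤ)) ^ 2 = ((2 * u ^ 2 : ℕ) : ℤ) := by push_cast; ring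
    rw [e1, e2, Int.gcd_natCast_natCast]
    exact hcop
  obtain ⟨m, n, hmn, hz, hco, _⟩ := PythagoreanTriple.coprime_classification.mp ⟨ht, hgcd⟩
  rcases hmn with ⟨hv2, hu2⟩ | ⟨hv2, _⟩
  · -- v² = m² - n², 2u² = 2mn
    have hX : (X : ℤ) = m ^ 2 + n ^ 2 := by
      rcases hz with hz | hz
      · exact hz
      · exfalso
        have h2 : (X : ℤ) ≤ 0 := by nlinarith [sq_nonneg m, sq_nonneg n]
        omega
    have hu2' : (u : ℤ) ^ 2 = m * n := by linarith
    set M := m.natAbs with hMdef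
    set N := n.natAbs with hNdef
    have hMsq : ((M : ℤ)) ^ 2 = m ^ 2 := Int.natAbs_sq m
    have hNsq : ((N : ℤ)) ^ 2 = n ^ 2 := Int.natAbs_sq n
    have hMN : u ^ 2 = M * N := by
      have := congrArg Int.natAbs hu2'
      simpa [Int.natAbs_mul, Int.natAbs_pow] using this
    have hvNM : v ^ 2 + N ^ 2 = M ^ 2 := by
      have : ((v : ℤ)) ^ 2 + ((N : ℤ)) ^ 2 = ((M : ℤ)) ^ 2 := by
        rw [hMsq, hNsq]; linear_combination hv2
      exact_mod_cast this
    have hXMN : X = M ^ 2 + N ^ 2 := by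
      have : ((X : ℤ)) = ((M : ℤ)) ^ 2 + ((N : ℤ)) ^ 2 := by rw [hMsq, hNsq]; exact hX
      exact_mod_cast this
    have hcoMN : Nat.Coprime M N := hco
    have hNpos : 0 < N := by
      rcases Nat.eq_zero_or_pos N with h0 | h0
      · exfalso; rw [h0, mul_zero] at hMN; simp at hMN; omega
      · exact h0
    have hMpos : 0 < M := by
      rcases Nat.eq_zero_or_pos M with h0 | h0
      · exfalso; rw [h0, zero_mul] at hMN; simp at hMN; omega
      · exact h0
    obtain ⟨e, he⟩ := nat_sq_of_coprime hcoMN hMN.symm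
    obtain ⟨f, hf⟩ := nat_sq_of_coprime hcoMN.symm (by rw [mul_comm]; exact hMN.symm)
    have hfpos : 0 < f := by
      rcases Nat.eq_zero_or_pos f with h0 | h0
      · exfalso; rw [h0] at hf; simp at hf; omega
      · exact h0
    refine ⟨e, f, v, hfpos, hv, ?_, ?_, ?_⟩
    · have : Nat.Coprime (e ^ 2) (f ^ 2) := by rw [← he, ← hf]; exact hcoMN
      exact (Nat.coprime_pow_left_iff (by norm_num) _ _).mp
        ((Nat.coprime_pow_right_iff (by norm_num) _ _).mp this)
    · have hrec : M ^ 2 = N ^ 2 + v ^ 2 := by omega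
      calc e ^ 4 = (e ^ 2) ^ 2 := by ring
      _ = M ^ 2 := by rw [he]
      _ = N ^ 2 + v ^ 2 := hrec
      _ = (f ^ 2) ^ 2 + v ^ 2 := by rw [hf]
      _ = f ^ 4 + v ^ 2 := by ring
    · have h1 : e ≤ e ^ 2 := Nat.le_self_pow (by norm_num) e
      have h2 : e ^ 2 ≤ (e ^ 2) ^ 2 := Nat.le_self_pow (by norm_num) _
      have h3 : (e ^ 2) ^ 2 = M ^ 2 := by rw [he]
      have h4 : 0 < N ^ 2 := by positivity
      omega
  · -- v² = 2mn : impossible by parity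
    exfalso
    have h1 : Even ((v : ℤ) ^ 2) := by rw [hv2]; exact ⟨m * n, by ring⟩
    have h2 : Even (v ^ 2) := by exact_mod_cast h1
    obtain ⟨t, ht⟩ := (Nat.even_pow.mp h2).1
    omega

/-- Fermat's right triangle theorem: `X⁴ = Y⁴ + Z²` has no positive solutions. -/
theorem no_right_triangle : ∀ X Y Z : ℕ, Nat.Coprime X Y → 0 < Y → 0 < Z →
    X ^ 4 ≠ Y ^ 4 + Z ^ 2 := by
  intro X
  induction X using Nat.strong_induction_on with
  | _ X IH =>
  intro Y Z hcop hY hZ h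
  have hZ2 : 1 ≤ Z ^ 2 := Nat.one_le_pow _ _ hZ
  have hY2 : 1 ≤ Y ^ 2 := Nat.one_le_pow _ _ hY
  have hY4 : 1 ≤ Y ^ 4 := Nat.one_le_pow _ _ hY
  have hX : 0 < X := by
    rcases Nat.eq_zero_or_pos X with h0 | h0
    · exfalso
      have h2 : X ^ 4 = 0 := by rw [h0]; ring
      omega
    · exact h0
  have hcYZ : Nat.Coprime (Y ^ 2) Z := by
    have hd1 : Nat.gcd (Y ^ 2) Z ∣ Y ^ 2 := Nat.gcd_dvd_left _ _
    have hd2 : Nat.gcd (Y ^ 2) Z ∣ Z := Nat.gcd_dvd_right _ _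
    have hd3 : Nat.gcd (Y ^ 2) Z ∣ X ^ 4 := by
      rw [h]
      refine dvd_add ?_ (dvd_pow hd2 two_ne_zero)
      have := dvd_pow hd1 two_ne_zero
      rwa [show (Y ^ 2) ^ 2 = Y ^ 4 by ring] at this
    have hcop2 : Nat.Coprime (X ^ 4) (Y ^ 2) := Nat.Coprime.pow _ _ hcop
    have : Nat.gcd (Y ^ 2) Z ∣ 1 := by
      rw [← hcop2]
      exact Nat.dvd_gcd hd3 hd1
    simpa [Nat.Coprime] using Nat.eq_one_of_dvd_one this
  have ht : PythagoreanTriple ((Y : ℤ) ^ 2) (Z : ℤ) ((X : ℤ) ^ 2) := by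
    have hI : (X : ℤ) ^ 4 = (Y : ℤ) ^ 4 + (Z : ℤ) ^ 2 := by exact_mod_cast h
    show (Y : ℤ) ^ 2 * (Y : ℤ) ^ 2 + (Z : ℤ) * (Z : ℤ) = (X : ℤ) ^ 2 * ((X : ℤ) ^ 2)
    linear_combination -hI
  have hgcd : Int.gcd ((Y : ℤ) ^ 2) (Z : ℤ) = 1 := by
    have e1 : ((Y : ℤ)) ^ 2 = ((Y ^ 2 : ℕ) : ℤ) := by push_cast; ring
    rw [e1, Int.gcd_natCast_natCast]
    exact hcYZ
  obtain ⟨m, n, hmn, hz, hco, hpar⟩ := PythagoreanTriple.coprime_classification.mp ⟨ht, hgcd⟩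
  have hX2 : ((X : ℤ)) ^ 2 = m ^ 2 + n ^ 2 := by
    rcases hz with hz | hz
    · exact hz
    · exfalso
      have h1 : ((X : ℤ)) ^ 2 ≤ 0 := by nlinarith [sq_nonneg m, sq_nonneg n]
      have h2 : ((X : ℤ)) ^ 2 ≥ 0 := sq_nonneg _
      have h3 : ((X : ℤ)) ^ 2 = 0 := le_antisymm h1 h2
      have h4 : (X : ℤ) = 0 := pow_eq_zero_iff two_ne_zero |>.mp h3
      have : X = 0 := by exact_mod_cast h4
      omega
  set M := m.natAbs with hMdef
  set N := n.natAbs with hNdef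
  have hMsq : ((M : ℤ)) ^ 2 = m ^ 2 := Int.natAbs_sq m
  have hNsq : ((N : ℤ)) ^ 2 = n ^ 2 := Int.natAbs_sq n
  have hXMN : X ^ 2 = M ^ 2 + N ^ 2 := by
    have : ((X : ℤ)) ^ 2 = ((M : ℤ)) ^ 2 + ((N : ℤ)) ^ 2 := by rw [hMsq, hNsq]; exact hX2
    exact_mod_cast this
  have hcoMN : Nat.Coprime M N := hco
  rcases hmn with ⟨hY2', hZ2'⟩ | ⟨hY2', hZ2'⟩
  · -- Case A : Y² = m² - n², Z = 2mn
    have hNpos : 0 < N := by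
      rcases Nat.eq_zero_or_pos N with h0 | h0
      · exfalso
        have hn0 : n = 0 := Int.natAbs_eq_zero.mp h0
        rw [hn0] at hZ2'
        simp at hZ2'
        omega
      · exact h0
    have hMX : M < X := by
      have hlt : M ^ 2 < X ^ 2 := by
        have : 0 < N ^ 2 := by positivity
        omega
      by_contra hc
      push_neg at hc
      have := Nat.pow_le_pow_left hc 2
      omega
    have heq : M ^ 4 = N ^ 4 + (X * Y) ^ 2 := by
      have : ((M : ℤ)) ^ 4 = ((N : ℤ)) ^ 4 + (((X : ℤ)) * ((Y : ℤ))) ^ 2 := by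
        have hM4 : ((M : ℤ)) ^ 4 = m ^ 4 := by
          rw [show ((M : ℤ)) ^ 4 = (((M : ℤ)) ^ 2) ^ 2 by ring, hMsq]; ring
        have hN4 : ((N : ℤ)) ^ 4 = n ^ 4 := by
          rw [show ((N : ℤ)) ^ 4 = (((N : ℤ)) ^ 2) ^ 2 by ring, hNsq]; ring
        rw [hM4, hN4]
        linear_combination (-(m ^ 2 + n ^ 2)) * hY2' - ((Y : ℤ)) ^ 2 * hX2
      exact_mod_cast this
    exact IH M hMX N (X * Y) hcoMN hNpos (by positivity) heq
  · -- Case B : Y² = 2mn, Z = m² - n²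
    have hY2MN : Y ^ 2 = 2 * (M * N) := by
      have := congrArg Int.natAbs hY2'
      simp [Int.natAbs_mul, Int.natAbs_pow] at this
      rw [this]; ring
    have hMpos : 0 < M := by
      rcases Nat.eq_zero_or_pos M with h0 | h0
      · exfalso; rw [h0] at hY2MN; simp at hY2MN; omega
      · exact h0
    have hNpos : 0 < N := by
      rcases Nat.eq_zero_or_pos N with h0 | h0
      · exfalso; rw [h0] at hY2MN; simp at hY2MN; omega
      · exact h0
    have hparMN : (M % 2 = 0 ∧ N % 2 = 1) ∨ (M % 2 = 1 ∧ N % 2 = 0) := by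
      rcases hpar with ⟨h1, h2⟩ | ⟨h1, h2⟩
      · left
        constructor
        · have he : Even m := Int.even_iff.mpr h1
          have : Even M := (Int.natAbs_even).mpr he
          omega
        · have ho : Odd n := Int.odd_iff.mpr h2
          have : Odd N := (Int.natAbs_odd).mpr ho
          omega
      · right
        constructor
        · have ho : Odd m := Int.odd_iff.mpr h1
          have : Odd M := (Int.natAbs_odd).mpr ho
          omega
        · have he : Even n := Int.even_iff.mpr h2
          have : Even N := (Int.natAbs_even).mpr he
          omega
    rcases hparMN with ⟨hMe, hNo⟩ | ⟨hMo, hNe⟩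
    · -- M even
      obtain ⟨M', hM'⟩ : ∃ M', M = 2 * M' := ⟨M / 2, by omega⟩
      have hYe : Y % 2 = 0 := by
        by_contra hYo
        obtain ⟨t, rfl⟩ : ∃ t, Y = 2 * t + 1 := ⟨Y / 2, by omega⟩
        have hodd : (2 * t + 1) ^ 2 = 2 * (2 * t ^ 2 + 2 * t) + 1 := by ring
        omega
      obtain ⟨Y', rfl⟩ : ∃ Y', Y = 2 * Y' := ⟨Y / 2, by omega⟩
      have hY'MN : Y' ^ 2 = M' * N := by
        have h4 : (2 * Y') ^ 2 = 4 * Y' ^ 2 := by ring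
        have h5 : M * N = 2 * (M' * N) := by rw [hM']; ring
        omega
      have hcoM'N : Nat.Coprime M' N :=
        Nat.Coprime.coprime_dvd_left ⟨2, by omega⟩ hcoMN
      obtain ⟨su, hsu⟩ := nat_sq_of_coprime hcoM'N hY'MN.symm
      obtain ⟨sv, hsv⟩ := nat_sq_of_coprime hcoM'N.symm (by rw [mul_comm]; exact hY'MN.symm)
      have hsupos : 0 < su := by
        rcases Nat.eq_zero_or_pos su with h0 | h0
        · exfalso; rw [h0] at hsu; simp at hsu; omega
        · exact h0
      have hsvpos : 0 < sv := by
        rcases Nat.eq_zero_or_pos sv with h0 | h0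
        · exfalso; rw [h0] at hsv; simp at hsv; omega
        · exact h0
      have hkey : X ^ 2 = 4 * su ^ 4 + sv ^ 4 := by
        have e1 : M ^ 2 = 4 * (su ^ 2) ^ 2 := by rw [hM', hsu]; ring
        have e2 : N ^ 2 = (sv ^ 2) ^ 2 := by rw [hsv]
        have e3 : (su ^ 2) ^ 2 = su ^ 4 := by ring
        have e4 : (sv ^ 2) ^ 2 = sv ^ 4 := by ring
        omega
      have hcop2 : Nat.Coprime (sv ^ 2) (2 * su ^ 2) := by
        rw [← hsv, ← hsu, ← hM']
        exact hcoMN.symm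
      obtain ⟨e, f, w, hf, hw, hcoef, heq, heX⟩ := key2 hsupos hsvpos hcop2 hkey
      exact IH e heX f w hcoef hf hw heq
    · -- N even
      obtain ⟨N', hN'⟩ : ∃ N', N = 2 * N' := ⟨N / 2, by omega⟩
      have hYe : Y % 2 = 0 := by
        by_contra hYo
        obtain ⟨t, rfl⟩ : ∃ t, Y = 2 * t + 1 := ⟨Y / 2, by omega⟩
        have hodd : (2 * t + 1) ^ 2 = 2 * (2 * t ^ 2 + 2 * t) + 1 := by ring
        omega
      obtain ⟨Y', rfl⟩ : ∃ Y', Y = 2 * Y' := ⟨Y / 2, by omega⟩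
      have hY'MN : Y' ^ 2 = M * N' := by
        have h4 : (2 * Y') ^ 2 = 4 * Y' ^ 2 := by ring
        have h5 : M * N = 2 * (M * N') := by rw [hN']; ring
        omega
      have hcoMN' : Nat.Coprime M N' :=
        Nat.Coprime.coprime_dvd_right ⟨2, by omega⟩ hcoMN
      obtain ⟨su, hsu⟩ := nat_sq_of_coprime hcoMN' hY'MN.symm
      obtain ⟨sv, hsv⟩ := nat_sq_of_coprime hcoMN'.symm (by rw [mul_comm]; exact hY'MN.symm)
      have hsupos : 0 < su := by
        rcases Nat.eq_zero_or_pos su with h0 | h0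
        · exfalso; rw [h0] at hsu; simp at hsu; omega
        · exact h0
      have hsvpos : 0 < sv := by
        rcases Nat.eq_zero_or_pos sv with h0 | h0
        · exfalso; rw [h0] at hsv; simp at hsv; omega
        · exact h0
      have hkey : X ^ 2 = 4 * sv ^ 4 + su ^ 4 := by
        have e1 : N ^ 2 = 4 * (sv ^ 2) ^ 2 := by rw [hN', hsv]; ring
        have e2 : M ^ 2 = (su ^ 2) ^ 2 := by rw [hsu]
        have e3 : (su ^ 2) ^ 2 = su ^ 4 := by ring
        have e4 : (sv ^ 2) ^ 2 = sv ^ 4 := by ring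
        omega
      have hcop2 : Nat.Coprime (su ^ 2) (2 * sv ^ 2) := by
        rw [← hsv, ← hsu, ← hN']
        exact hcoMN
      obtain ⟨e, f, w, hf, hw, hcoef, heq, heX⟩ := key2 hsvpos hsupos hcop2 hkey
      exact IH e heX f w hcoef hf hw heq

end S1S2Aux

namespace S1S2Aux

/-- `b⁴ + 1 = 2c⁴` forces `b = 1`. -/
lemma quartic_add_one_eq_two_quartic {b c : ℕ} (hb : 0 < b) (hc : 0 < c)
    (h : b ^ 4 + 1 = 2 * c ^ 4) : b = 1 := by
  by_contra hb1
  have hb2 : 2 ≤ b := by omega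
  have hbodd : b % 2 = 1 := by
    by_contra hbe
    obtain ⟨t, rfl⟩ : ∃ t, b = 2 * t := ⟨b / 2, by omega⟩
    have h1 : (2 * t) ^ 4 = 2 * (8 * t ^ 4) := by ring
    omega
  have hcop : Nat.Coprime c b := by
    have hd1 : Nat.gcd c b ∣ 2 * c ^ 4 :=
      Dvd.dvd.mul_left (dvd_pow (Nat.gcd_dvd_left _ _) (by norm_num)) 2
    have hd2 : Nat.gcd c b ∣ b ^ 4 := dvd_pow (Nat.gcd_dvd_right _ _) (by norm_num)
    have : Nat.gcd c b ∣ 1 := by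
      have h3 : 2 * c ^ 4 - b ^ 4 = 1 := by omega
      calc Nat.gcd c b ∣ 2 * c ^ 4 - b ^ 4 := Nat.dvd_sub hd1 hd2
      _ = 1 := h3
    simpa [Nat.Coprime] using Nat.eq_one_of_dvd_one this
  have hb4odd : b ^ 4 % 2 = 1 := by
    obtain ⟨t, rfl⟩ : ∃ t, b = 2 * t + 1 := ⟨b / 2, by omega⟩
    have h1 : (2 * t + 1) ^ 4 = 2 * (8 * t ^ 4 + 16 * t ^ 3 + 12 * t ^ 2 + 4 * t) + 1 := by ring
    omega
  have hb16 : 16 ≤ b ^ 4 := by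
    calc (16 : ℕ) = 2 ^ 4 := by norm_num
    _ ≤ b ^ 4 := Nat.pow_le_pow_left hb2 4
  obtain ⟨W, hW⟩ : ∃ W, b ^ 4 = 2 * W + 1 := ⟨b ^ 4 / 2, by omega⟩
  have hWpos : 0 < W := by omega
  have hc4 : c ^ 4 = W + 1 := by omega
  have key : (c ^ 2) ^ 4 = b ^ 4 + W ^ 2 := by
    have e1 : (c ^ 2) ^ 4 = (c ^ 4) ^ 2 := by ring
    rw [e1, hc4]
    have e2 : (W + 1) ^ 2 = W ^ 2 + (2 * W + 1) := by ring
    omega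
  exact no_right_triangle (c ^ 2) b W (Nat.Coprime.pow_left _ hcop) hb hWpos key

/-- Main arithmetic result: positive solutions of `q⁴ - q² = 2x² - 2x` have `q = 1` or `q = 2`. -/
theorem main1 (q x : ℕ) (hq : 0 < q) (hx : 0 < x)
    (h : q ^ 4 - q ^ 2 = 2 * x ^ 2 - 2 * x) : q = 1 ∨ q = 2 := by
  have hq2 : 1 ≤ q ^ 2 := Nat.one_le_pow _ _ hq
  have hq42 : q ^ 2 ≤ q ^ 4 := Nat.pow_le_pow_right hq (by omega)
  have hx2 : x ≤ x ^ 2 := Nat.le_self_pow two_ne_zero x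
  have hbal : q ^ 4 + 2 * x = q ^ 2 + 2 * x ^ 2 := by omega
  obtain ⟨u, hu⟩ : ∃ u, u + 1 = 2 * q ^ 2 := ⟨2 * q ^ 2 - 1, by omega⟩
  obtain ⟨z, hz⟩ : ∃ z, z + 1 = 2 * x := ⟨2 * x - 1, by omega⟩
  have hpell : u ^ 2 + 1 = 2 * z ^ 2 := by
    have hbalZ : (q : ℤ) ^ 4 + 2 * (x : ℤ) = (q : ℤ) ^ 2 + 2 * (x : ℤ) ^ 2 := by
      exact_mod_cast hbal
    have huZ : (u : ℤ) = 2 * (q : ℤ) ^ 2 - 1 := by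
      have : ((u : ℤ)) + 1 = 2 * ((q ^ 2 : ℕ) : ℤ) := by exact_mod_cast hu
      push_cast at this
      omega
    have hzZ : (z : ℤ) = 2 * (x : ℤ) - 1 := by
      have : ((z : ℤ)) + 1 = 2 * ((x : ℕ) : ℤ) := by exact_mod_cast hz
      omega
    have : (u : ℤ) ^ 2 + 1 = 2 * (z : ℤ) ^ 2 := by
      rw [huZ, hzZ]; linear_combination 4 * hbalZ
    exact_mod_cast this
  obtain ⟨n, hun, hzn⟩ := classify z u hpell
  have hnodd : Odd n := by
    rcases Nat.even_or_odd n with he | ho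
    · exfalso
      have hp := pell_even he
      rw [hun, hzn] at hpell
      omega
    · exact ho
  obtain ⟨m, hm⟩ := hnodd
  have hHodd : Hs (2 * m + 1) = Hs m * Hs (m + 1) + 2 * (Ps m * Ps (m + 1)) := by
    rw [Hs_odd_idx]; ring
  have h2q : 2 * q ^ 2 = Hs m * Hs (m + 1) + 2 * (Ps m * Ps (m + 1)) + 1 := by
    rw [← hHodd, ← hm, ← hun]
    omega
  rcases Nat.even_or_odd m with heven | hodd
  · -- m even : q² = Hs m * Hs (m+1), leading to q = 1
    left
    have hcross : Hs m * Hs (m + 1) = 2 * (Ps m * Ps (m + 1)) + 1 := by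
      have hcr := (cross m).1 heven
      rw [mul_comm (Hs (m + 1)), mul_comm (Ps (m + 1))] at hcr
      exact hcr
    have hq2eq : q ^ 2 = Hs m * Hs (m + 1) := by omega
    have h2H : Nat.Coprime 2 (Hs m) :=
      (Nat.Prime.coprime_iff_not_dvd Nat.prime_two).mpr (by have := Hs_odd m; omega)
    have hcopH : Nat.Coprime (Hs m) (Hs (m + 1)) := by
      have h1 : Nat.Coprime (Hs m) (2 * Ps m) := Nat.Coprime.mul_right h2H.symm (coprime_HP m)
      have h2 : Hs (m + 1) = 2 * Ps m + Hs m := by simp [Hs_succ]; ring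
      rw [h2]
      exact (Nat.coprime_add_self_right).mpr h1
    obtain ⟨a, ha⟩ := nat_sq_of_coprime hcopH hq2eq.symm
    have ha4 : a ^ 4 = 2 * Ps m ^ 2 + 1 := by
      rw [show a ^ 4 = (a ^ 2) ^ 2 by ring, ← ha]
      exact pell_even heven
    obtain ⟨ha1, hPm0⟩ := quartic_eq_two_sq_add_one ha4
    have hm0 : m = 0 := Ps_eq_zero hPm0
    rw [hm0] at hq2eq
    have hq1 : q ^ 2 = 1 := by
      rw [hq2eq]
      decide
    have hqle : q ≤ 1 := by
      by_contra hgt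
      push_neg at hgt
      have h4 : 4 ≤ q ^ 2 := by
        calc (4 : ℕ) = 2 ^ 2 := by norm_num
        _ ≤ q ^ 2 := Nat.pow_le_pow_left hgt 2
      omega
    omega
  · -- m odd : q² = 2 Pₘ Pₘ₊₁, leading to q = 2
    right
    have hcross : Hs m * Hs (m + 1) + 1 = 2 * (Ps m * Ps (m + 1)) := by
      have hcr := (cross m).2 hodd
      rw [mul_comm (Hs (m + 1)), mul_comm (Ps (m + 1))] at hcr
      exact hcr
    have hq2eq : q ^ 2 = 2 * (Ps m * Ps (m + 1)) := by omega
    obtain ⟨r, hr⟩ : ∃ r, m + 1 = 2 * r := by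
      obtain ⟨t, ht⟩ := hodd
      exact ⟨t + 1, by omega⟩
    have hrpos : 0 < r := by omega
    have hPdouble : Ps (m + 1) = 2 * Ps r * Hs r := by rw [hr]; exact Ps_double r
    have hq4eq : q ^ 2 = 4 * (Ps m * (Ps r * Hs r)) := by
      rw [hq2eq, hPdouble]; ring
    have hqeven : q % 2 = 0 := by
      by_contra hqo
      obtain ⟨t, rfl⟩ : ∃ t, q = 2 * t + 1 := ⟨q / 2, by omega⟩
      have h1 : (2 * t + 1) ^ 2 = 4 * (t ^ 2 + t) + 1 := by ring
      omega
    obtain ⟨q', rfl⟩ : ∃ q', q = 2 * q' := ⟨q / 2, by omega⟩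
    have hq'eq : q' ^ 2 = Ps m * (Ps r * Hs r) := by
      have h1 : (2 * q') ^ 2 = 4 * q' ^ 2 := by ring
      omega
    have hPmcop : Nat.Coprime (Ps m) (Ps r * Hs r) :=
      Nat.Coprime.coprime_dvd_right ⟨2, by rw [hPdouble]; ring⟩ (coprime_Ps_succ m)
    obtain ⟨β, hβ⟩ := nat_sq_of_coprime hPmcop.symm (by rw [mul_comm]; exact hq'eq.symm)
    obtain ⟨c, hc⟩ := nat_sq_of_coprime (coprime_HP r).symm hβ
    obtain ⟨b, hbH⟩ := nat_sq_of_coprime (coprime_HP r) (by rw [mul_comm]; exact hβ)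
    have hrodd : Odd r := by
      rcases Nat.even_or_odd r with hre | hro
      · exfalso
        have hp := pell_even hre
        have hb4 : b ^ 4 = 2 * Ps r ^ 2 + 1 := by
          rw [show b ^ 4 = (b ^ 2) ^ 2 by ring, ← hbH]
          exact hp
        obtain ⟨_, hPr0⟩ := quartic_eq_two_sq_add_one hb4
        have : r = 0 := Ps_eq_zero hPr0
        omega
      · exact hro
    have hPrpos : 0 < Ps r := Ps_pos r hrpos
    have hHrpos : 0 < Hs r := Hs_pos r
    have hbpos : 0 < b := by
      rcases Nat.eq_zero_or_pos b with h0 | h0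
      · exfalso; rw [h0] at hbH; simp at hbH; omega
      · exact h0
    have hcpos : 0 < c := by
      rcases Nat.eq_zero_or_pos c with h0 | h0
      · exfalso; rw [h0] at hc; simp at hc; omega
      · exact h0
    have hb4 : b ^ 4 + 1 = 2 * c ^ 4 := by
      rw [show b ^ 4 = (b ^ 2) ^ 2 by ring, show c ^ 4 = (c ^ 2) ^ 2 by ring, ← hbH, ← hc]
      exact pell_odd hrodd
    have hb1 : b = 1 := quartic_add_one_eq_two_quartic hbpos hcpos hb4
    have hHr1 : Hs r = 1 := by rw [hbH, hb1]; ring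
    have hr1 : r = 1 := by
      have := Hs_eq_one hHr1
      omega
    have hm1 : m = 1 := by omega
    have : q' ^ 2 = 1 := by
      rw [hq'eq, hm1, hr1]
      decide
    have hq'le : q' ≤ 1 := by
      by_contra hgt
      push_neg at hgt
      have h4 : 4 ≤ q' ^ 2 := by
        calc (4 : ℕ) = 2 ^ 2 := by norm_num
        _ ≤ q' ^ 2 := Nat.pow_le_pow_left hgt 2
      omega
    omega

end S1S2Aux

/-- If `q, x` are positive integers with `q⁴ - q² = 2x² - 2x`, then `q = 1` or `q = 2`;
equivalently, `S₁ ∩ S₂ = {1, 4}` where `S₁ = {n : ∃ x > 0, n(n-1) = 2x(x-1)}` and `S₂` is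
the set of perfect squares. -/
theorem S1_inter_S2_eq :
    (∀ q x : ℕ, 0 < q → 0 < x → q ^ 4 - q ^ 2 = 2 * x ^ 2 - 2 * x → q = 1 ∨ q = 2) ∧
    ({n : ℕ | 0 < n ∧ ∃ x : ℕ, 0 < x ∧ n * (n - 1) = 2 * (x * (x - 1))} ∩
      {n : ℕ | ∃ k : ℕ, 0 < k ∧ n = k ^ 2} = {1, 4}) := by
  constructor
  · exact S1S2Aux.main1
  · ext n
    simp only [Set.mem_inter_iff, Set.mem_setOf_eq, Set.mem_insert_iff, Set.mem_singleton_iff]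
    constructor
    · rintro ⟨⟨hn, x, hx, hxx⟩, k, hk, rfl⟩
      have hk2 : 1 ≤ k ^ 2 := Nat.one_le_pow _ _ hk
      have hk42 : k ^ 2 ≤ k ^ 4 := Nat.pow_le_pow_right hk (by omega)
      have hx2 : x ≤ x ^ 2 := Nat.le_self_pow two_ne_zero x
      have h2x : 2 * x ≤ 2 * x ^ 2 := by omega
      have hxxZ : (k : ℤ) ^ 2 * ((k : ℤ) ^ 2 - 1) = 2 * ((x : ℤ) * ((x : ℤ) - 1)) := by
        zify [hk2, hx] at hxx
        exact hxx
      have hmain : k ^ 4 - k ^ 2 = 2 * x ^ 2 - 2 * x := by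
        zify [hk42, h2x]
        linear_combination hxxZ
      rcases S1S2Aux.main1 k x hk hx hmain with rfl | rfl
      · left; norm_num
      · right; norm_num
    · rintro (rfl | rfl)
      · exact ⟨⟨one_pos, 1, one_pos, by norm_num⟩, 1, one_pos, by norm_num⟩
      · exact ⟨⟨by norm_num, 3, by norm_num, by norm_num⟩, 2, by norm_num, by norm_num⟩
end

section
/- Define sequences of integers by Q_0 = 1, Q_1 = 1, Q_{k+1} = 2Q_k + Q_{k−1} (the half-companion Pell numbers, satisfying Q_k = ((1+√2)^k + (1−√2)^k)/2). Then for every positive integer k with k ≡ 1 (mod 4), Q_k + 1 = 2 · Q_{(k−1)/2} · Q_{(k+1)/2}. -/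
/-- The half-companion Pell numbers: `Q 0 = 1`, `Q 1 = 1`, `Q (k+2) = 2 Q (k+1) + Q k`,
so that `Q k = ((1+√2)^k + (1-√2)^k)/2`. -/
def halfCompanionPell : ℕ → ℤ
  | 0 => 1
  | 1 => 1
  | (k + 2) => 2 * halfCompanionPell (k + 1) + halfCompanionPell k

private def pellP : ℕ → ℤ
  | 0 => 0
  | 1 => 1
  | (k + 2) => 2 * pellP (k + 1) + pellP k

private lemma step (m : ℕ) :
    halfCompanionPell (m + 1) = halfCompanionPell m + 2 * pellP m ∧
      pellP (m + 1) = pellP m + halfCompanionPell m := by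
  induction m with
  | zero => simp [halfCompanionPell, pellP]
  | succ n ih =>
    obtain ⟨h1, h2⟩ := ih
    constructor
    · show 2 * halfCompanionPell (n + 1) + halfCompanionPell n = _
      rw [h1, h2]; ring
    · show 2 * pellP (n + 1) + pellP n = _
      rw [h1, h2]; ring

private lemma invariant (m : ℕ) :
    halfCompanionPell m ^ 2 - 2 * pellP m ^ 2 = (-1) ^ m := by
  induction m with
  | zero => simp [halfCompanionPell, pellP]
  | succ n ih =>
    have hp : ((-1 : ℤ)) ^ (n + 1) = -(-1) ^ n := by rw [pow_succ]; ring
    rw [(step n).1, (step n).2, hp]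
    linear_combination -ih

private lemma doubling (m : ℕ) :
    halfCompanionPell (2 * m) = 2 * halfCompanionPell m ^ 2 - (-1) ^ m ∧
      pellP (2 * m) = 2 * pellP m * halfCompanionPell m := by
  induction m with
  | zero => simp [halfCompanionPell, pellP]
  | succ n ih =>
    obtain ⟨h1, h2⟩ := ih
    have e : 2 * (n + 1) = (2 * n + 1) + 1 := by ring
    have inv := invariant n
    have hp : ((-1 : ℤ)) ^ (n + 1) = -(-1) ^ n := by rw [pow_succ]; ring
    rw [e]
    constructor
    · rw [(step (2 * n + 1)).1, (step (2 * n)).1, (step (2 * n)).2, h1, h2,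
        (step n).1, hp]
      linear_combination 4 * inv
    · rw [(step (2 * n + 1)).2, (step (2 * n)).1, (step (2 * n)).2, h1, h2,
        (step n).1, (step n).2]
      linear_combination 2 * inv

private lemma key (m : ℕ) :
    halfCompanionPell (2 * m + 1) =
      2 * halfCompanionPell m * halfCompanionPell (m + 1) - (-1) ^ m := by
  rw [(step (2 * m)).1, (doubling m).1, (doubling m).2, (step m).1]
  ring

/-- For `k ≡ 1 (mod 4)`, `Q_k + 1 = 2 Q_{(k-1)/2} Q_{(k+1)/2}`. -/
theorem halfCompanionPell_add_one_of_mod_four_eq_one (k : ℕ) (hk : 0 < k)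
    (hmod : k % 4 = 1) :
    halfCompanionPell k + 1 =
      2 * halfCompanionPell ((k - 1) / 2) * halfCompanionPell ((k + 1) / 2) := by
  obtain ⟨j, rfl⟩ : ∃ j, k = 4 * j + 1 := ⟨k / 4, by omega⟩
  have h1 : (4 * j + 1 - 1) / 2 = 2 * j := by omega
  have h2 : (4 * j + 1 + 1) / 2 = 2 * j + 1 := by omega
  have h3 : 4 * j + 1 = 2 * (2 * j) + 1 := by ring
  rw [h1, h2, h3, key (2 * j)]
  have : (-1 : ℤ) ^ (2 * j) = 1 := by
    rw [pow_mul]; norm_num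
  rw [this]; ring
end
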